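/- The space (D^∞, OT_∞) of persistence diagrams with bounded persistence, equipped with the bottleneck distance, is not separable: the family {a_I = Σ_{i∈I} δ_{(i,i+1)} : I ⊂ ℕ} is uncountable and OT_∞(a_I, a_{I'}) = √2/2 for any two distinct subsets I ≠ I' of ℕ. -/

import Mathlib

noncomputable section

open MeasureTheory Metric Set Filter Topology ENNReal
open scoped Classical

/-- The plane with the Euclidean distance. -/
abbrev Pt : Type := EuclideanSpace ℝ (Fin 2)

/-- Build a point of the plane from coordinates. -/
def mk2 (a b : ℝ) : Pt := (WithLp.equiv 2 (Fin 2 → ℝ)).symm ![a, b]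

/-- The open upper half-plane Ω = {(t₁,t₂) : t₂ > t₁}. -/
def UHP : Set Pt := {x | x 0 < x 1}

/-- The diagonal ∂Ω = {(t,t)}. -/
def Diag : Set Pt := {x | x 0 = x 1}

/-- Ω̄ = Ω ∪ ∂Ω. -/
def UHPbar : Set Pt := UHP ∪ Diag

/-- Distance from a point to the diagonal. -/
def persDist (x : Pt) : ℝ := infDist x Diag

/-- p-th total persistence Pers_p(μ) = ∫_Ω d(x,∂Ω)^p dμ(x). -/
def Pers (p : ℝ) (μ : Measure Pt) : ℝ≥0∞ :=
  ∫⁻ x in UHP, ENNReal.ofReal (persDist x ^ p) ∂μ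

/-- μ ∈ M^p : a measure supported on Ω with finite p-th persistence. -/
def MemMp (p : ℝ) (μ : Measure Pt) : Prop := μ UHPᶜ = 0 ∧ Pers p μ < ⊤

/-- Admissible partial transport plans between μ and ν: measures on Ω̄ × Ω̄ whose
marginals restricted to Ω are μ and ν. -/
def Adm (μ ν : Measure Pt) : Set (Measure (Pt × Pt)) :=
  {π | π ((UHPbar ×ˢ UHPbar)ᶜ) = 0 ∧
    (∀ A : Set Pt, MeasurableSet A → A ⊆ UHP → π (A ×ˢ univ) = μ A) ∧
    (∀ B : Set Pt, MeasurableSet B → B ⊆ UHP → π (univ ×ˢ B) = ν B)}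

/-- Cost C_p(π) = ∬ d(x,y)^p dπ(x,y). -/
def Cost (p : ℝ) (π : Measure (Pt × Pt)) : ℝ≥0∞ :=
  ∫⁻ z, ENNReal.ofReal (dist z.1 z.2 ^ p) ∂π

/-- OT_p(μ,ν)^p, as an extended real. -/
def OTe (p : ℝ) (μ ν : Measure Pt) : ℝ≥0∞ := ⨅ π ∈ Adm μ ν, Cost p π

/-- The optimal partial transport distance OT_p(μ,ν). -/
def OT (p : ℝ) (μ ν : Measure Pt) : ℝ := (OTe p μ ν ^ (1 / p)).toReal

/-- Optimal plans. -/
def OptSet (p : ℝ) (μ ν : Measure Pt) : Set (Measure (Pt × Pt)) :=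
  {π | π ∈ Adm μ ν ∧ Cost p π = OTe p μ ν}

/-- Vague convergence of measures on Ω: convergence of integrals of continuous
functions compactly supported in Ω. -/
def VagueTendsto (μs : ℕ → Measure Pt) (μ : Measure Pt) : Prop :=
  ∀ f : Pt → ℝ, Continuous f → HasCompactSupport f → tsupport f ⊆ UHP →
    Tendsto (fun n => ∫ x, f x ∂(μs n)) atTop (𝓝 (∫ x, f x ∂μ))

/-- E_Ω = (Ω̄ × Ω̄) \ (∂Ω × ∂Ω). -/
def EOm : Set (Pt × Pt) := (UHPbar ×ˢ UHPbar) \ (Diag ×ˢ Diag)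

/-- Vague convergence of plans on E_Ω. -/
def VaguePlanTendsto (πs : ℕ → Measure (Pt × Pt)) (π : Measure (Pt × Pt)) : Prop :=
  ∀ f : Pt × Pt → ℝ, Continuous f → HasCompactSupport f → tsupport f ⊆ EOm →
    Tendsto (fun n => ∫ z, f z ∂(πs n)) atTop (𝓝 (∫ z, f z ∂π))

/-- A persistence diagram: an ℕ-valued point measure Σ_{x ∈ X} n_x δ_x with
X ⊆ Ω locally finite in Ω. -/
def IsDiagram (μ : Measure Pt) : Prop :=
  ∃ (X : Set Pt) (n : Pt → ℕ), X ⊆ UHP ∧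
    (∀ x ∈ UHP, ∃ U ∈ 𝓝 x, (X ∩ U).Finite) ∧
    μ = Measure.sum (fun x : X => (n x.1 : ℝ≥0∞) • Measure.dirac (x.1 : Pt))

/-- Support of a measure on Pt × Pt. -/
def msupp (π : Measure (Pt × Pt)) : Set (Pt × Pt) := {z | ∀ U ∈ 𝓝 z, π U ≠ 0}

/-- Support of a measure on Pt. -/
def suppM (μ : Measure Pt) : Set Pt := {x | ∀ U ∈ 𝓝 x, μ U ≠ 0}

/-- Bottleneck cost of a plan: sup of d(x,y) over the support. -/
def CostInf (π : Measure (Pt × Pt)) : ℝ≥0∞ :=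
  ⨆ z ∈ msupp π, ENNReal.ofReal (dist z.1 z.2)

/-- The bottleneck (∞) optimal partial transport distance, as extended real. -/
def OTinfE (μ ν : Measure Pt) : ℝ≥0∞ := ⨅ π ∈ Adm μ ν, CostInf π

/-- μ ∈ M^∞ : support at bounded distance from the diagonal. -/
def MemMinf (μ : Measure Pt) : Prop :=
  μ UHPᶜ = 0 ∧ ∃ C : ℝ, ∀ x ∈ suppM μ, persDist x ≤ C

/-- A partial matching between two indexed families: a bijection between
subsets of the index sets; unmatched points are sent to the diagonal. -/
structure Matching (ι κ : Type*) where
  I : Set ι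
  J : Set κ
  e : I ≃ J

/-- Cost of a partial matching for d_p (as the p-th power, extended real). -/
def mCost (p : ℝ) {ι κ : Type*} (x : ι → Pt) (y : κ → Pt) (m : Matching ι κ) : ℝ≥0∞ :=
  (∑' i : m.I, ENNReal.ofReal (dist (x i.1) (y (m.e i).1) ^ p))
  + (∑' i : ↥(m.Iᶜ), ENNReal.ofReal (persDist (x i.1) ^ p))
  + (∑' j : ↥(m.Jᶜ), ENNReal.ofReal (persDist (y j.1) ^ p))

/-- Bottleneck cost of a partial matching. -/
def mCostInf {ι κ : Type*} (x : ι → Pt) (y : κ → Pt) (m : Matching ι κ) : ℝ≥0∞ :=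
  (⨆ i : m.I, ENNReal.ofReal (dist (x i.1) (y (m.e i).1)))
  ⊔ (⨆ i : ↥(m.Iᶜ), ENNReal.ofReal (persDist (x i.1)))
  ⊔ (⨆ j : ↥(m.Jᶜ), ENNReal.ofReal (persDist (y j.1)))

/-- The point measure associated to an indexed family of points. -/
def famMeasure {ι : Type*} (x : ι → Pt) : Measure Pt :=
  Measure.sum (fun i => Measure.dirac (x i))

/-- The weighted measure μ^p, with density d(x,∂Ω)^p with respect to μ. -/
def wgt (p : ℝ) (μ : Measure Pt) : Measure Pt :=
  μ.withDensity (fun x => ENNReal.ofReal (persDist x ^ p))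

/-- The quotient space Ω̃ = Ω ⊔ {∂Ω}. -/
def Qt : Type := Option ↥UHP

/-- The quotient metric ρ on Ω̃. -/
def ρQ : Qt → Qt → ℝ
  | some x, some y => min (dist (x : Pt) (y : Pt)) (persDist x + persDist y)
  | some x, none => persDist x
  | none, some y => persDist y
  | none, none => 0

/-- The quotient metric ρ viewed on the plane, all diagonal points being
identified. -/
def ρP (x y : Pt) : ℝ :=
  if x ∈ Diag then (if y ∈ Diag then 0 else persDist y)
  else if y ∈ Diag then persDist x
  else min (dist x y) (persDist x + persDist y)

/-- Couplings with full (equal-mass) marginals. -/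
def Coup (μ ν : Measure Pt) : Set (Measure (Pt × Pt)) :=
  {π | π.map Prod.fst = μ ∧ π.map Prod.snd = ν}

/-- The p-Wasserstein distance (to the p) for the quotient metric ρ. -/
def WpE (p : ℝ) (μ ν : Measure Pt) : ℝ≥0∞ :=
  ⨅ π ∈ Coup μ ν, ∫⁻ z, ENNReal.ofReal (ρP z.1 z.2 ^ p) ∂π


/-- The diagram a_I = Σ_{i ∈ I} δ_{(i,i+1)}. -/
def aI (I : Set ℕ) : Measure Pt :=
  Measure.sum (fun i : I => Measure.dirac (mk2 (i.1 : ℝ) ((i.1 : ℝ) + 1)))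

-- basic lemmas
def pA (i : ℕ) : Pt := mk2 (i : ℝ) ((i : ℝ) + 1)
def qA (i : ℕ) : Pt := mk2 ((i : ℝ) + 1/2) ((i : ℝ) + 1/2)

lemma mk2_zero (a b : ℝ) : mk2 a b 0 = a := rfl
lemma mk2_one (a b : ℝ) : mk2 a b 1 = b := rfl

lemma dist_pt (x y : Pt) : dist x y = Real.sqrt ((x 0 - y 0)^2 + (x 1 - y 1)^2) := by
  rw [EuclideanSpace.dist_eq, Fin.sum_univ_two]
  norm_num [Real.dist_eq, sq_abs]

lemma sqrt2_half_pos : 0 < Real.sqrt 2 / 2 := by positivity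

lemma sqrt2_half_sq : (Real.sqrt 2 / 2)^2 = 1/2 := by
  rw [div_pow, Real.sq_sqrt (by norm_num : (0:ℝ) ≤ 2)]; norm_num

lemma sqrt2_half_eq : Real.sqrt 2 / 2 = Real.sqrt (1/2) := by
  rw [← sqrt2_half_sq, Real.sqrt_sq sqrt2_half_pos.le]

lemma sqrt2_half_lt_one : Real.sqrt 2 / 2 < 1 := by
  nlinarith [sqrt2_half_sq, sqrt2_half_pos]

lemma pA_mem_UHP (i : ℕ) : pA i ∈ UHP := by
  simp only [UHP, pA, Set.mem_setOf_eq, mk2_zero, mk2_one]; linarith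

lemma qA_mem_Diag (i : ℕ) : qA i ∈ Diag := rfl

lemma qA_not_mem_UHP (i : ℕ) : qA i ∉ UHP := by
  simp only [UHP, qA, Set.mem_setOf_eq, mk2_zero, mk2_one]; exact lt_irrefl _

lemma dist_pA_qA (i : ℕ) : dist (pA i) (qA i) = Real.sqrt 2 / 2 := by
  have h : (pA i 0 - qA i 0)^2 + (pA i 1 - qA i 1)^2 = 1/2 := by
    simp only [pA, qA, mk2_zero, mk2_one]; ring
  rw [dist_pt, h, sqrt2_half_eq]

lemma dist_pA_diag (i : ℕ) {y : Pt} (hy : y ∈ Diag) : Real.sqrt 2 / 2 ≤ dist (pA i) y := by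
  have h : y 0 = y 1 := hy
  rw [dist_pt, sqrt2_half_eq]
  apply Real.sqrt_le_sqrt
  simp only [pA, mk2_zero, mk2_one]
  nlinarith [sq_nonneg ((i:ℝ) - y 0 + 1/2)]

lemma dist_pA_pA {i j : ℕ} (h : i ≠ j) : 1 ≤ dist (pA i) (pA j) := by
  have h1 : (1:ℤ) ≤ |(i:ℤ) - j| := Int.one_le_abs (sub_ne_zero.mpr (by exact_mod_cast h))
  have h1' : (1:ℝ) ≤ |(i:ℝ) - j| := by exact_mod_cast h1
  have h2 : (1:ℝ) ≤ (pA i 0 - pA j 0)^2 + (pA i 1 - pA j 1)^2 := by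
    simp only [pA, mk2_zero, mk2_one]
    nlinarith [sq_abs ((i:ℝ) - j)]
  calc (1:ℝ) = Real.sqrt 1 := Real.sqrt_one.symm
  _ ≤ _ := by rw [dist_pt]; exact Real.sqrt_le_sqrt h2

lemma cont0 : Continuous fun x : Pt => x 0 :=
  (EuclideanSpace.proj (0 : Fin 2) : EuclideanSpace ℝ (Fin 2) →L[ℝ] ℝ).continuous

lemma cont1 : Continuous fun x : Pt => x 1 :=
  (EuclideanSpace.proj (1 : Fin 2) : EuclideanSpace ℝ (Fin 2) →L[ℝ] ℝ).continuous

lemma isOpen_UHP : IsOpen UHP := isOpen_lt cont0 cont1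

lemma isClosed_UHPbar : IsClosed UHPbar := by
  have h : UHPbar = {x : Pt | x 0 ≤ x 1} := by
    ext x
    simp only [UHPbar, UHP, Diag, Set.mem_union, Set.mem_setOf_eq]
    constructor
    · rintro (h | h); exacts [h.le, h.le]
    · intro h; rcases lt_or_eq_of_le h with h | h; exacts [Or.inl h, Or.inr h]
  rw [h]; exact isClosed_le cont0 cont1

lemma not_mem_msupp (π : Measure (Pt × Pt)) {U : Set (Pt × Pt)} (hU : IsOpen U)
    (h0 : π U = 0) {z : Pt × Pt} (hz : z ∈ U) : z ∉ msupp π :=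
  fun h => h U (hU.mem_nhds hz) h0

lemma msupp_compl_null (π : Measure (Pt × Pt)) : π (msupp π)ᶜ = 0 := by
  have h : ∀ z : {z : Pt × Pt // z ∉ msupp π},
      ∃ U : Set (Pt × Pt), IsOpen U ∧ z.1 ∈ U ∧ π U = 0 := by
    rintro ⟨z, hz⟩
    simp only [msupp, Set.mem_setOf_eq] at hz
    push_neg at hz
    obtain ⟨U, hU, h0⟩ := hz
    obtain ⟨V, hVU, hVo, hzV⟩ := _root_.mem_nhds_iff.mp hU
    exact ⟨V, hVo, hzV, le_antisymm ((measure_mono hVU).trans_eq h0) zero_le⟩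
  choose U hUo hzU hU0 using h
  obtain ⟨T, hTc, hTU⟩ := TopologicalSpace.isOpen_iUnion_countable U hUo
  have hsub : (msupp π)ᶜ ⊆ ⋃ z ∈ T, U z := by
    intro z hz
    rw [hTU]
    exact Set.mem_iUnion.mpr ⟨⟨z, hz⟩, hzU _⟩
  refine le_antisymm ((measure_mono hsub).trans_eq ?_) zero_le
  exact (measure_biUnion_null_iff hTc).mpr fun z _ => hU0 z

lemma aI_apply {I : Set ℕ} {B : Set Pt} (hB : MeasurableSet B) :
    aI I B = ∑' i : I, Measure.dirac (pA i.1) B := by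
  rw [aI, Measure.sum_apply _ hB]; rfl

lemma aI_one_le {I : Set ℕ} {i : ℕ} (hi : i ∈ I) : 1 ≤ aI I {pA i} := by
  rw [aI_apply (measurableSet_singleton _)]
  have h : Measure.dirac (pA ((⟨i, hi⟩ : I) : ℕ)) {pA i} = 1 := Measure.dirac_apply_of_mem rfl
  exact h.symm.le.trans (ENNReal.le_tsum _)

lemma aI_null {I : Set ℕ} {B : Set Pt} (hB : MeasurableSet B) (h : ∀ i ∈ I, pA i ∉ B) :
    aI I B = 0 := by
  rw [aI_apply hB, ENNReal.tsum_eq_zero]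
  rintro ⟨i, hi⟩
  rw [Measure.dirac_apply' _ hB, Set.indicator_of_notMem (h i hi)]

def pl (I J : Set ℕ) : Measure (Pt × Pt) :=
  (Measure.sum fun i : I => Measure.dirac (pA i.1, qA i.1)) +
  (Measure.sum fun j : J => Measure.dirac (qA j.1, pA j.1))

lemma pl_apply {I J : Set ℕ} {S : Set (Pt × Pt)} (hS : MeasurableSet S) :
    pl I J S = (∑' i : I, Measure.dirac ((pA i.1, qA i.1) : Pt × Pt) S)
      + ∑' j : J, Measure.dirac ((qA j.1, pA j.1) : Pt × Pt) S := by
  rw [pl, Measure.add_apply, Measure.sum_apply _ hS, Measure.sum_apply _ hS]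

lemma pl_adm (I J : Set ℕ) : pl I J ∈ Adm (aI I) (aI J) := by
  have hbar : MeasurableSet (UHPbar ×ˢ UHPbar : Set (Pt × Pt)) :=
    isClosed_UHPbar.measurableSet.prod isClosed_UHPbar.measurableSet
  refine ⟨?_, ?_, ?_⟩
  · rw [pl_apply hbar.compl]
    rw [ENNReal.tsum_eq_zero.mpr, ENNReal.tsum_eq_zero.mpr, add_zero]
    · rintro ⟨j, hj⟩
      rw [Measure.dirac_apply' _ hbar.compl, Set.indicator_of_notMem]
      simp only [Set.notMem_compl_iff]
      exact Set.mem_prod.mpr ⟨Or.inr (qA_mem_Diag _), Or.inl (pA_mem_UHP _)⟩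
    · rintro ⟨i, hi⟩
      rw [Measure.dirac_apply' _ hbar.compl, Set.indicator_of_notMem]
      simp only [Set.notMem_compl_iff]
      exact Set.mem_prod.mpr ⟨Or.inl (pA_mem_UHP _), Or.inr (qA_mem_Diag _)⟩
  · intro A hA hAU
    have hAm : MeasurableSet (A ×ˢ (univ : Set Pt)) := hA.prod MeasurableSet.univ
    rw [pl_apply hAm, aI_apply hA]
    have h2 : ∀ j : J, Measure.dirac ((qA j.1, pA j.1) : Pt × Pt) (A ×ˢ univ) = 0 := by
      intro j
      rw [Measure.dirac_apply' _ hAm,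
        Set.indicator_of_notMem (fun hmem => qA_not_mem_UHP j.1 (hAU hmem.1))]
    have h3 : ∀ i : I, Measure.dirac ((pA i.1, qA i.1) : Pt × Pt) (A ×ˢ univ)
        = Measure.dirac (pA i.1) A := by
      intro i
      rw [Measure.dirac_apply' _ hAm, Measure.dirac_apply' _ hA]
      by_cases h : pA i.1 ∈ A
      · rw [Set.indicator_of_mem (Set.mem_prod.mpr ⟨h, Set.mem_univ _⟩), Set.indicator_of_mem h]; rfl
      · rw [Set.indicator_of_notMem (fun hmem => h hmem.1), Set.indicator_of_notMem h]
    rw [ENNReal.tsum_eq_zero.mpr h2, add_zero]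
    exact tsum_congr h3
  · intro B hB hBU
    have hBm : MeasurableSet ((univ : Set Pt) ×ˢ B) := MeasurableSet.univ.prod hB
    rw [pl_apply hBm, aI_apply hB]
    have h2 : ∀ i : I, Measure.dirac ((pA i.1, qA i.1) : Pt × Pt) (univ ×ˢ B) = 0 := by
      intro i
      rw [Measure.dirac_apply' _ hBm,
        Set.indicator_of_notMem (fun hmem => qA_not_mem_UHP i.1 (hBU hmem.2))]
    have h3 : ∀ j : J, Measure.dirac ((qA j.1, pA j.1) : Pt × Pt) (univ ×ˢ B)
        = Measure.dirac (pA j.1) B := by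
      intro j
      rw [Measure.dirac_apply' _ hBm, Measure.dirac_apply' _ hB]
      by_cases h : pA j.1 ∈ B
      · rw [Set.indicator_of_mem (Set.mem_prod.mpr ⟨Set.mem_univ _, h⟩), Set.indicator_of_mem h]; rfl
      · rw [Set.indicator_of_notMem (fun hmem => h hmem.2), Set.indicator_of_notMem h]
    rw [ENNReal.tsum_eq_zero.mpr h2, zero_add]
    exact tsum_congr h3

lemma costInf_pl_le (I J : Set ℕ) : CostInf (pl I J) ≤ ENNReal.ofReal (Real.sqrt 2 / 2) := by
  set K : Set (Pt × Pt) := {z | dist z.1 z.2 ≤ Real.sqrt 2 / 2} with hKdef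
  have hK : IsClosed K := isClosed_le continuous_dist continuous_const
  have h0 : pl I J Kᶜ = 0 := by
    rw [pl_apply hK.measurableSet.compl]
    rw [ENNReal.tsum_eq_zero.mpr, ENNReal.tsum_eq_zero.mpr, add_zero]
    · rintro ⟨j, hj⟩
      rw [Measure.dirac_apply' _ hK.measurableSet.compl, Set.indicator_of_notMem]
      simp only [Set.notMem_compl_iff, hKdef, Set.mem_setOf_eq]
      rw [dist_comm]
      exact (dist_pA_qA j).le
    · rintro ⟨i, hi⟩
      rw [Measure.dirac_apply' _ hK.measurableSet.compl, Set.indicator_of_notMem]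
      simp only [Set.notMem_compl_iff, hKdef, Set.mem_setOf_eq]
      exact (dist_pA_qA i).le
  have key : ∀ z ∈ msupp (pl I J), dist z.1 z.2 ≤ Real.sqrt 2 / 2 := by
    intro z hz
    by_contra h
    exact not_mem_msupp _ hK.isOpen_compl h0 (fun hmem => h hmem) hz
  calc CostInf (pl I J) = ⨆ z ∈ msupp (pl I J), ENNReal.ofReal (dist z.1 z.2) := rfl
  _ ≤ _ := iSup₂_le fun z hz => ENNReal.ofReal_le_ofReal (key z hz)

lemma avoid_pA {y : Pt} {J : Set ℕ} (hy : ∀ j ∈ J, y ≠ pA j) :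
    ∃ r > 0, ∀ j ∈ J, pA j ∉ ball y r := by
  by_cases hex : ∃ j ∈ J, dist y (pA j) < 1/2
  · obtain ⟨j0, hj0, hd⟩ := hex
    refine ⟨dist y (pA j0), dist_pos.mpr (hy j0 hj0), ?_⟩
    intro j hj hmem
    rw [mem_ball, dist_comm] at hmem
    have hjj0 : j = j0 := by
      by_contra hne
      have h1 := dist_pA_pA hne
      have h2 : dist (pA j) (pA j0) ≤ dist (pA j) y + dist y (pA j0) := dist_triangle _ _ _
      rw [dist_comm (pA j) y] at h2
      linarith
    rw [hjj0, dist_comm] at hmem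
    exact lt_irrefl _ hmem
  · push_neg at hex
    refine ⟨1/2, by norm_num, fun j hj hmem => ?_⟩
    rw [mem_ball, dist_comm] at hmem
    exact absurd hmem (not_lt.mpr (hex j hj))

lemma lower₁ {I J : Set ℕ} {i : ℕ} (hiI : i ∈ I) (hiJ : i ∉ J)
    {π : Measure (Pt × Pt)} (hπ : π ∈ Adm (aI I) (aI J)) :
    ENNReal.ofReal (Real.sqrt 2 / 2) ≤ CostInf π := by
  obtain ⟨hnull, hfst, hsnd⟩ := hπ
  by_contra hlt
  push_neg at hlt
  have hmass : 1 ≤ π ({pA i} ×ˢ (univ : Set Pt)) := by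
    rw [hfst {pA i} (measurableSet_singleton _) (Set.singleton_subset_iff.mpr (pA_mem_UHP i))]
    exact aI_one_le hiI
  have hex : ∃ y : Pt, (pA i, y) ∈ msupp π := by
    by_contra h
    push_neg at h
    have hsub : {pA i} ×ˢ (univ : Set Pt) ⊆ (msupp π)ᶜ := by
      intro z hz
      have h1 : z.1 = pA i := hz.1
      intro hmem
      exact h z.2 (by rw [← h1]; exact hmem)
    have h0 : π ({pA i} ×ˢ (univ : Set Pt)) = 0 :=
      le_antisymm ((measure_mono hsub).trans_eq (msupp_compl_null π)) zero_le
    rw [h0] at hmass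
    simp at hmass
  obtain ⟨y, hy⟩ := hex
  have hdy : dist (pA i) y < Real.sqrt 2 / 2 := by
    have h1 : ENNReal.ofReal (dist (pA i) y) ≤ CostInf π :=
      le_iSup₂ (f := fun (z : Pt × Pt) (_ : z ∈ msupp π) => ENNReal.ofReal (dist z.1 z.2))
        (pA i, y) hy
    exact (ENNReal.ofReal_lt_ofReal_iff sqrt2_half_pos).mp (h1.trans_lt hlt)
  have hybar : y ∈ UHPbar := by
    by_contra hyb
    exact not_mem_msupp π (isClosed_UHPbar.prod isClosed_UHPbar).isOpen_compl hnull
      (fun hmem => hyb hmem.2) hy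
  rcases hybar with hyU | hyD
  · by_cases hyP : ∃ j ∈ J, y = pA j
    · obtain ⟨j, hj, rfl⟩ := hyP
      have hne : i ≠ j := fun h => hiJ (h ▸ hj)
      linarith [dist_pA_pA hne, sqrt2_half_lt_one]
    · push_neg at hyP
      obtain ⟨r, hr, hsep⟩ := avoid_pA hyP
      have hBo : IsOpen (ball y r ∩ UHP) := isOpen_ball.inter isOpen_UHP
      have hB0 : π ((univ : Set Pt) ×ˢ (ball y r ∩ UHP)) = 0 := by
        rw [hsnd _ hBo.measurableSet Set.inter_subset_right]
        exact aI_null hBo.measurableSet fun j hj hmem => hsep j hj hmem.1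
      exact not_mem_msupp π (isOpen_univ.prod hBo) hB0
        ⟨Set.mem_univ _, Set.mem_inter (mem_ball_self hr) hyU⟩ hy
  · exact absurd hdy (not_lt.mpr (dist_pA_diag i hyD))

lemma lower₂ {I J : Set ℕ} {i : ℕ} (hiJ : i ∈ J) (hiI : i ∉ I)
    {π : Measure (Pt × Pt)} (hπ : π ∈ Adm (aI I) (aI J)) :
    ENNReal.ofReal (Real.sqrt 2 / 2) ≤ CostInf π := by
  obtain ⟨hnull, hfst, hsnd⟩ := hπ
  by_contra hlt
  push_neg at hlt
  have hmass : 1 ≤ π ((univ : Set Pt) ×ˢ {pA i}) := by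
    rw [hsnd {pA i} (measurableSet_singleton _) (Set.singleton_subset_iff.mpr (pA_mem_UHP i))]
    exact aI_one_le hiJ
  have hex : ∃ y : Pt, (y, pA i) ∈ msupp π := by
    by_contra h
    push_neg at h
    have hsub : (univ : Set Pt) ×ˢ {pA i} ⊆ (msupp π)ᶜ := by
      intro z hz
      have h1 : z.2 = pA i := hz.2
      intro hmem
      exact h z.1 (by rw [← h1]; exact hmem)
    have h0 : π ((univ : Set Pt) ×ˢ {pA i}) = 0 :=
      le_antisymm ((measure_mono hsub).trans_eq (msupp_compl_null π)) zero_le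
    rw [h0] at hmass
    simp at hmass
  obtain ⟨y, hy⟩ := hex
  have hdy : dist y (pA i) < Real.sqrt 2 / 2 := by
    have h1 : ENNReal.ofReal (dist y (pA i)) ≤ CostInf π :=
      le_iSup₂ (f := fun (z : Pt × Pt) (_ : z ∈ msupp π) => ENNReal.ofReal (dist z.1 z.2))
        (y, pA i) hy
    exact (ENNReal.ofReal_lt_ofReal_iff sqrt2_half_pos).mp (h1.trans_lt hlt)
  have hybar : y ∈ UHPbar := by
    by_contra hyb
    exact not_mem_msupp π (isClosed_UHPbar.prod isClosed_UHPbar).isOpen_compl hnull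
      (fun hmem => hyb hmem.1) hy
  rcases hybar with hyU | hyD
  · by_cases hyP : ∃ j ∈ I, y = pA j
    · obtain ⟨j, hj, rfl⟩ := hyP
      have hne : j ≠ i := fun h => hiI (h ▸ hj)
      linarith [dist_pA_pA hne, sqrt2_half_lt_one]
    · push_neg at hyP
      obtain ⟨r, hr, hsep⟩ := avoid_pA hyP
      have hBo : IsOpen (ball y r ∩ UHP) := isOpen_ball.inter isOpen_UHP
      have hB0 : π ((ball y r ∩ UHP) ×ˢ (univ : Set Pt)) = 0 := by
        rw [hfst _ hBo.measurableSet Set.inter_subset_right]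
        exact aI_null hBo.measurableSet fun j hj hmem => hsep j hj hmem.1
      exact not_mem_msupp π (hBo.prod isOpen_univ) hB0
        ⟨Set.mem_inter (mem_ball_self hr) hyU, Set.mem_univ _⟩ hy
  · rw [dist_comm] at hdy
    exact absurd hdy (not_lt.mpr (dist_pA_diag i hyD))

lemma pA_inj : Function.Injective pA := by
  intro a b h
  have h0 : pA a 0 = pA b 0 := congrArg (fun x : Pt => x 0) h
  simp only [pA, mk2_zero] at h0
  exact_mod_cast h0

lemma mem_iff_aI {I : Set ℕ} {i : ℕ} : i ∈ I ↔ aI I {pA i} ≠ 0 := by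
  constructor
  · intro hi h0
    exact absurd (aI_one_le hi) (by rw [h0]; simp)
  · intro h
    by_contra hi
    exact h (aI_null (measurableSet_singleton _)
      fun j hj hmem => hi ((pA_inj (Set.mem_singleton_iff.mp hmem)) ▸ hj))


/-- the family {a_I : I ⊆ ℕ} is uncountable and any two distinct
members are at bottleneck distance √2/2; hence (D^∞, OT_∞) is not separable. -/
theorem stmt15 :
    Function.Injective aI ∧ ¬ (Set.range aI).Countable ∧
    ∀ I J : Set ℕ, I ≠ J → OTinfE (aI I) (aI J) = ENNReal.ofReal (Real.sqrt 2 / 2) := by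

  have hinj : Function.Injective aI := by
    intro I J h
    ext i
    rw [mem_iff_aI, mem_iff_aI, h]
  refine ⟨hinj, ?_, ?_⟩
  · intro hc
    have h1 := hc.preimage hinj
    rw [Set.preimage_range, Set.countable_univ_iff] at h1
    obtain ⟨f, hf⟩ := exists_injective_nat (Set ℕ)
    exact Function.cantor_injective f hf
  · intro I J hIJ
    have hdiff : ∃ i, (i ∈ I ∧ i ∉ J) ∨ (i ∈ J ∧ i ∉ I) := by
      by_contra h
      push_neg at h
      apply hIJ
      ext i
      have := h i
      tauto
    obtain ⟨i, hi⟩ := hdiff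
    apply le_antisymm
    · exact (iInf₂_le (pl I J) (pl_adm I J)).trans (costInf_pl_le I J)
    · refine le_iInf₂ fun π hπ => ?_
      rcases hi with ⟨h1, h2⟩ | ⟨h1, h2⟩
      exacts [lower₁ h1 h2 hπ, lower₂ h1 h2 hπ]
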